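/- There is no Grothendieck topology J on RingCatᵒᵖ such that both: (i) for every commutative ring A, every natural number m, and every family of elements r₁,…,r_m ∈ A generating the unit ideal of A, the sieve on the object of RingCatᵒᵖ corresponding to A generated by the morphisms opposite to the canonical localization maps A → A[rᵢ⁻¹] (i = 1,…,m) is J-covering; and (ii) J is subcanonical, i.e., for every ring S the representable presheaf Hom_{RingCatᵒᵖ}(−, S) is a J-sheaf. -/

import Mathlib

open Polynomial

noncomputable def Uop : Module.End ℤ (Polynomial ℤ) := LinearMap.mulLeft ℤ (X : Polynomial ℤ)

noncomputable def Vop : Module.End ℤ (Polynomial ℤ) where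
  toFun := Polynomial.divX
  map_add' _ _ := Polynomial.divX_add
  map_smul' z p := by
    ext n
    simp [Polynomial.coeff_divX, Polynomial.coeff_smul]

noncomputable def Sop : Module.End ℤ (Polynomial ℤ) :=
  (Polynomial.aeval (1 - X : Polynomial ℤ)).toLinearMap

@[simp] lemma Uop_apply (p : Polynomial ℤ) : Uop p = X * p := rfl
@[simp] lemma Vop_apply (p : Polynomial ℤ) : Vop p = p.divX := rfl
@[simp] lemma Sop_apply (p : Polynomial ℤ) : Sop p = Polynomial.aeval (1 - X : Polynomial ℤ) p := rfl

lemma VU : Vop * Uop = 1 :=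
  LinearMap.ext fun p => Polynomial.ext fun n => by
    simp [Module.End.mul_apply, Polynomial.coeff_divX, Polynomial.coeff_X_mul]

lemma SS : Sop * Sop = 1 := by
  apply LinearMap.ext; intro p
  have h : ((Polynomial.aeval (1 - X : Polynomial ℤ)).comp (Polynomial.aeval (1 - X : Polynomial ℤ))) = AlgHom.id ℤ (Polynomial ℤ) := by
    apply Polynomial.algHom_ext
    simp
  have := DFunLike.congr_fun h p
  simpa [Module.End.mul_apply] using this

lemma S1U : Sop * (1 - Uop) = Uop * Sop := by
  apply LinearMap.ext; intro p
  simp [Module.End.mul_apply, LinearMap.sub_apply, Module.End.one_apply, map_sub, map_mul]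
  ring

noncomputable def V'op : Module.End ℤ (Polynomial ℤ) := Sop * Vop * Sop
noncomputable def pE : Module.End ℤ (Polynomial ℤ) := 1 - Uop * Vop
noncomputable def qE : Module.End ℤ (Polynomial ℤ) := 1 - (1 - Uop) * V'op

lemma V'1U : V'op * (1 - Uop) = 1 := by
  have h2 : Vop * (Uop * Sop) = Sop := by rw [← mul_assoc, VU, one_mul]
  calc V'op * (1 - Uop) = Sop * (Vop * (Sop * (1 - Uop))) := by
        simp [V'op, mul_assoc]
    _ = Sop * Sop := by rw [S1U, h2]
    _ = 1 := SS

lemma qσ : qE = Sop * pE * Sop := by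
  have h1 : (1 - Uop) * Sop = Sop * Uop := by
    have := congrArg (fun a => Sop * a) S1U
    -- Sop * (Sop * (1-Uop)) = Sop * (Uop * Sop)
    simp only [← mul_assoc, SS, one_mul] at this
    -- this : (1 - Uop) = Sop * Uop * Sop  (wrong shape?)
    rw [this]
    rw [mul_assoc, mul_assoc, SS, mul_one]
  calc qE = 1 - ((1 - Uop) * Sop) * (Vop * Sop) := by simp [qE, V'op, mul_assoc]
    _ = 1 - Sop * (Uop * Vop) * Sop := by rw [h1]; simp [mul_assoc]
    _ = Sop * pE * Sop := by simp [pE, mul_sub, sub_mul, SS, mul_one, mul_assoc]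

lemma pE_apply (f : Polynomial ℤ) : pE f = Polynomial.C (f.coeff 0) := by
  have := Polynomial.X_mul_divX_add (p := f)
  simp only [pE, LinearMap.sub_apply, Module.End.mul_apply, Module.End.one_apply, Uop_apply,
    Vop_apply]
  exact sub_eq_of_eq_add' this.symm

lemma pq : pE * qE = qE := by
  have hp : pE * (Sop * pE) = Sop * pE := by
    apply LinearMap.ext; intro f
    simp only [Module.End.mul_apply, pE_apply]
    simp [Polynomial.aeval_C, Polynomial.coeff_C_zero]
  calc pE * qE = (pE * (Sop * pE)) * Sop := by rw [qσ, ← mul_assoc]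
    _ = (Sop * pE) * Sop := by rw [hp]
    _ = qE := by rw [qσ]

lemma qE_ne : qE ≠ 0 := by
  intro h
  have : qE (1 : Polynomial ℤ) = 0 := by rw [h]; rfl
  rw [qσ] at this
  simp only [Module.End.mul_apply, Sop_apply, map_one, pE_apply, Polynomial.coeff_one] at this
  simp at this

universe u

lemma key {R B : Type*} [Ring R] [Ring B] (g : R →+* B) (u v v' : R)
    (hvu : v * u = 1) (hv' : v' * (1 - u) = 1)
    (hpq : (1 - u * v) * (1 - (1 - u) * v') = 1 - (1 - u) * v')
    (h : IsUnit (g u) ∨ IsUnit (g (1 - u))) :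
    g (1 - (1 - u) * v') = 0 := by
  rcases h with h | h
  · have h1 : g v * g u = 1 := by rw [← map_mul, hvu, map_one]
    have h2 : g u * g v = 1 := by
      rcases h with ⟨w, hw⟩
      have hv : g v = ↑w⁻¹ := by
        have : g v * ↑w = 1 := by rw [hw]; exact h1
        exact Units.eq_inv_of_mul_eq_one_right this
      rw [← hw, hv, Units.mul_inv]
    have h3 : g (1 - u * v) = 0 := by rw [map_sub, map_one, map_mul, h2, sub_self]
    calc g (1 - (1 - u) * v') = g (1 - u * v) * g (1 - (1 - u) * v') := by
          rw [← map_mul, hpq]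
      _ = 0 := by rw [h3, zero_mul]
  · have h1 : g v' * g (1 - u) = 1 := by rw [← map_mul, hv', map_one]
    have h2 : g (1 - u) * g v' = 1 := by
      rcases h with ⟨w, hw⟩
      have hv : g v' = ↑w⁻¹ := by
        have : g v' * ↑w = 1 := by rw [hw]; exact h1
        exact Units.eq_inv_of_mul_eq_one_right this
      rw [← hw, hv, Units.mul_inv]
    rw [map_sub, map_one, map_mul, h2, sub_self]

abbrev PU := ULift.{u} (Polynomial ℤ)

noncomputable def ψ : Module.End ℤ (Polynomial ℤ) →+* Module.End ℤ PU.{u} where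
  toFun f := (ULift.moduleEquiv.symm.toLinearMap.comp f).comp ULift.moduleEquiv.toLinearMap
  map_one' := by ext x; rfl
  map_mul' f g := by ext x; rfl
  map_zero' := by ext x; rfl
  map_add' f g := by ext x; rfl

lemma ψq_ne : ψ.{u} qE ≠ 0 := by
  intro h
  have h1 : (ψ qE) (ULift.up 1) = 0 := by rw [h]; rfl
  have h2 : (ψ qE) (ULift.up 1) = ULift.up (qE 1) := rfl
  rw [h2] at h1
  have : qE (1 : Polynomial ℤ) = 0 := congrArg ULift.down h1
  rw [qσ] at this
  simp only [Module.End.mul_apply, Sop_apply, map_one, pE_apply, Polynomial.coeff_one] at this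
  simp at this

open CategoryTheory Opposite

noncomputable def φ0 : PU.{u} →+* Module.End ℤ PU.{u} :=
  (Polynomial.aeval (ψ.{u} Uop)).toRingHom.comp (ULift.ringEquiv (R := Polynomial ℤ)).toRingHom

noncomputable def evq (w : Module.End ℤ PU.{u}) : PU.{u} →+* Module.End ℤ PU.{u} :=
  (Polynomial.aeval w).toRingHom.comp (ULift.ringEquiv (R := Polynomial ℤ)).toRingHom

lemma comp_evq {B : Type u} [Ring B] (g : Module.End ℤ PU.{u} →+* B) (w : Module.End ℤ PU.{u})
    (hg : g w = 0) : g.comp (evq.{u} w) = g.comp (evq.{u} 0) := by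
  ext a
  simp only [RingHom.comp_apply, evq, AlgHom.toRingHom_eq_coe, RingHom.coe_coe,
    RingEquiv.toRingHom_eq_coe]
  rw [Polynomial.aeval_def, Polynomial.aeval_def, Polynomial.hom_eval₂, Polynomial.hom_eval₂, hg,
    map_zero]

set_option maxHeartbeats 1000000 in
theorem stmt_7 :
    ¬ ∃ J : GrothendieckTopology RingCat.{u}ᵒᵖ,
      (∀ (A : Type u) [CommRing A] (m : ℕ) (r : Fin m → A),
        Ideal.span (Set.range r) = ⊤ →
        Sieve.generate
            (Presieve.ofArrows (fun i : Fin m => op (RingCat.of (Localization.Away (r i))))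
              (fun i => (RingCat.ofHom (algebraMap A (Localization.Away (r i)))).op)) ∈
          J (op (RingCat.of A))) ∧
      (∀ S : RingCat.{u}ᵒᵖ, Presieve.IsSheaf J (yoneda.obj S)) := by
  rintro ⟨J, hcov, hsheaf⟩
  classical
  let R0 : Type u := Module.End ℤ PU.{u}
  let u0 : R0 := ψ Uop
  let v0 : R0 := ψ Vop
  let v'0 : R0 := ψ V'op
  let q0 : R0 := ψ qE
  have hq0 : q0 = 1 - (1 - u0) * v'0 := by
    show ψ qE = 1 - (1 - ψ Uop) * ψ V'op
    rw [qE, ψ.map_sub, ψ.map_one, ψ.map_mul, ψ.map_sub, ψ.map_one]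
  have hvu0 : v0 * u0 = 1 := by
    show ψ Vop * ψ Uop = 1
    rw [← ψ.map_mul, VU, ψ.map_one]
  have hv'0 : v'0 * (1 - u0) = 1 := by
    have h : (1 : R0) - u0 = ψ (1 - Uop) := by rw [ψ.map_sub, ψ.map_one]
    rw [h, ← ψ.map_mul, V'1U, ψ.map_one]
  have hpq0 : (1 - u0 * v0) * (1 - (1 - u0) * v'0) = 1 - (1 - u0) * v'0 := by
    rw [← hq0]
    have h1 : (1 : R0) - u0 * v0 = ψ pE := by rw [pE, ψ.map_sub, ψ.map_one, ψ.map_mul]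
    rw [h1]
    show ψ pE * ψ qE = ψ qE
    rw [← ψ.map_mul, pq]
  let rfam : Fin 2 → PU.{u} := ![ULift.up Polynomial.X, ULift.up (1 - Polynomial.X)]
  have hspan : Ideal.span (Set.range rfam) = ⊤ := by
    rw [Ideal.eq_top_iff_one]
    have h1 : (1 : PU.{u}) = rfam 0 + rfam 1 := by
      apply ULift.down_injective
      show (1 : Polynomial ℤ) = Polynomial.X + (1 - Polynomial.X)
      ring
    rw [h1]
    exact Ideal.add_mem _ (Ideal.subset_span ⟨0, rfl⟩) (Ideal.subset_span ⟨1, rfl⟩)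
  let Pre : Presieve (op (RingCat.of PU.{u})) :=
    Presieve.ofArrows (fun i : Fin 2 => op (RingCat.of (Localization.Away (rfam i))))
      (fun i => (RingCat.ofHom (algebraMap PU.{u} (Localization.Away (rfam i)))).op)
  have hS1 : Sieve.generate Pre ∈ J (op (RingCat.of PU.{u})) := hcov PU.{u} 2 rfam hspan
  let φc : RingCat.of PU.{u} ⟶ RingCat.of R0 := RingCat.ofHom φ0.{u}
  have hT := J.pullback_stable φc.op hS1
  have hsep := (hsheaf (op (RingCat.of PU.{u})) _ hT).isSeparatedFor
  let hqm : RingCat.of PU.{u} ⟶ RingCat.of R0 := RingCat.ofHom (evq.{u} q0)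
  let h0m : RingCat.of PU.{u} ⟶ RingCat.of R0 := RingCat.ofHom (evq.{u} 0)
  have key2 : ∀ ⦃Y : RingCat.{u}ᵒᵖ⦄ ⦃f : Y ⟶ op (RingCat.of R0)⦄,
      ((Sieve.generate Pre).pullback φc.op) f →
      (yoneda.obj (op (RingCat.of PU.{u}))).map f.op hqm.op =
        (yoneda.obj (op (RingCat.of PU.{u}))).map f.op h0m.op := by
    intro Y f hf
    obtain ⟨Z, h, l, hl, hcomp⟩ := hf
    cases hl with
    | mk i =>
      have hun := congrArg Quiver.Hom.unop hcomp
      simp only [unop_comp] at hun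
      let g : Module.End ℤ PU.{u} →+* ↥(Y.unop) := f.unop.hom
      let hh : Localization.Away (rfam i) →+* ↥(Y.unop) := h.unop.hom
      have happ : hh ((algebraMap PU.{u} (Localization.Away (rfam i))) (rfam i)) =
          g (φ0.{u} (rfam i)) := DFunLike.congr_fun (congrArg RingCat.Hom.hom hun) (rfam i)
      have hloc : IsUnit ((algebraMap PU.{u} (Localization.Away (rfam i))) (rfam i)) :=
        IsLocalization.Away.algebraMap_isUnit (rfam i)
      have hunit : IsUnit (g (φ0.{u} (rfam i))) := happ ▸ hloc.map hh
      have hor : IsUnit (g u0) ∨ IsUnit (g (1 - u0)) := by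
        rcases (by decide : ∀ j : Fin 2, j = 0 ∨ j = 1) i with hi | hi
        · left
          subst hi
          have hv : φ0.{u} (rfam 0) = u0 := by
            simp [φ0, rfam, ULift.ringEquiv, u0]
          rwa [hv] at hunit
        · right
          subst hi
          have hv : φ0.{u} (rfam 1) = 1 - u0 := by
            simp [φ0, rfam, ULift.ringEquiv, map_sub, u0]
          rwa [hv] at hunit
      have hgq : g q0 = 0 := by
        rw [hq0]
        exact key g u0 v0 v'0 hvu0 hv'0 hpq0 hor
      show f ≫ hqm.op = f ≫ h0m.op
      apply Quiver.Hom.unop_inj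
      simp only [unop_comp, Quiver.Hom.unop_op]
      apply RingCat.hom_ext
      show g.comp (evq.{u} q0) = g.comp (evq.{u} 0)
      exact comp_evq g q0 hgq
  have heq : hqm.op = h0m.op := hsep.ext key2
  have hmor : hqm = h0m := Quiver.Hom.op_inj heq
  have happx := DFunLike.congr_fun (congrArg RingCat.Hom.hom hmor) (ULift.up Polynomial.X)
  have h2 : (evq.{u} q0) (ULift.up Polynomial.X) = q0 := by
    simp [evq, ULift.ringEquiv]
  have h3 : (evq.{u} (0 : R0)) (ULift.up Polynomial.X) = 0 := by
    simp [evq, ULift.ringEquiv]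
  have : q0 = (0 : R0) := by
    rw [← h2, ← h3]
    exact happx
  exact ψq_ne this
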